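/- Let M := {η ∈ C | Dη ∈ B(N, D̄)} where B(N, D̄) are coboundaries of the null subcomplex, and Z_q := {π_q(η) | η ∈ M, π_q(Dη) = 0}. Then π_q(Z(C,D)) = Z_q for every q: every pre-cocycle (projection of a cocycle) lies in Z_q, and conversely every element of Z_q is the π_q-projection of a genuine cocycle of (C, D). -/
import Mathlib


open DirectSum

variable {R M : Type} [CommRing R] [AddCommGroup M] [Module R M]

/-- Projection `π_q` of a bigraded module onto the part of second degree `≥ q`,
along the bigrading. -/
noncomputable def bproj (𝒞 : ℤ × ℤ → Submodule R M) [DirectSum.Decomposition 𝒞] (q : ℤ) :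
    M →ₗ[R] M :=
  (DirectSum.coeLinearMap 𝒞).comp <|
    (DFinsupp.filterLinearMap R (fun pq : ℤ × ℤ => 𝒞 pq) (fun pq => q ≤ pq.2)).comp
      (DirectSum.decomposeLinearEquiv 𝒞).toLinearMap

/-- The bihomogeneous component of bidegree `(p, q)` of an element. -/
noncomputable def bcomp (𝒞 : ℤ × ℤ → Submodule R M) [DirectSum.Decomposition 𝒞] (p q : ℤ)
    (x : M) : M :=
  (DirectSum.decompose 𝒞 x (p, q) : M)

/-- The total-degree-`k` part `C^k = ⊕_{p+q=k} C^{p,q}`. -/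
def bdeg (𝒞 : ℤ × ℤ → Submodule R M) (k : ℤ) : Submodule R M :=
  ⨆ p : ℤ, 𝒞 (p, k - p)

/-- The part of second degree `q`, `⊕_p C^{p,q}`. -/
def brow (𝒞 : ℤ × ℤ → Submodule R M) (q : ℤ) : Submodule R M :=
  ⨆ p : ℤ, 𝒞 (p, q)

/-- The decreasing column filtration `F^p C = ⊕_{i ≥ p, j} C^{i,j}`. -/
def bfil (𝒞 : ℤ × ℤ → Submodule R M) (p : ℤ) : Submodule R M :=
  ⨆ (i : ℤ) (_ : p ≤ i) (j : ℤ), 𝒞 (i, j)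

variable (𝒞 : ℤ × ℤ → Submodule R M) [DirectSum.Decomposition 𝒞]

noncomputable def compLM (i : ℤ × ℤ) : M →ₗ[R] M :=
  (𝒞 i).subtype ∘ₗ (DFinsupp.lapply i) ∘ₗ (DirectSum.decomposeLinearEquiv 𝒞).toLinearMap

lemma compLM_apply (i : ℤ × ℤ) (x : M) : compLM 𝒞 i x = (DirectSum.decompose 𝒞 x i : M) := rfl

lemma compLM_mem (i : ℤ × ℤ) (x : M) : compLM 𝒞 i x ∈ 𝒞 i := (DirectSum.decompose 𝒞 x i).2

lemma comp_sum' (s : Finset (ℤ × ℤ)) (σ : ℤ × ℤ → ℤ × ℤ) (hσ : Function.Injective σ)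
    (g : ℤ × ℤ → M) (hg : ∀ j ∈ s, g j ∈ 𝒞 (σ j)) (i : ℤ × ℤ) :
    compLM 𝒞 (σ i) (∑ j ∈ s, g j) = if i ∈ s then g i else 0 := by
  rw [map_sum]
  rw [Finset.sum_congr rfl (g := fun j => if j = i then g j else 0) ?_, Finset.sum_ite_eq' s i g]
  intro j hj
  rcases eq_or_ne j i with rfl | h
  · simp [compLM_apply, DirectSum.decompose_of_mem_same 𝒞 (hg j hj)]
  · simp [h, compLM_apply, DirectSum.decompose_of_mem_ne 𝒞 (hg j hj) (fun e => h (hσ e))]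

lemma comp_sum (s : Finset (ℤ × ℤ)) (c : ℤ × ℤ → M) (hc : ∀ i ∈ s, c i ∈ 𝒞 i) (j : ℤ × ℤ) :
    compLM 𝒞 j (∑ i ∈ s, c i) = if j ∈ s then c j else 0 :=
  comp_sum' 𝒞 s id Function.injective_id c hc j

lemma map_comp (f : M →ₗ[R] M) (σ : ℤ × ℤ → ℤ × ℤ) (hσ : Function.Injective σ)
    (hf : ∀ i, (𝒞 i).map f ≤ 𝒞 (σ i)) (x : M) (i : ℤ × ℤ) :
    compLM 𝒞 (σ i) (f x) = f (compLM 𝒞 i x) := by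
  classical
  conv_lhs => rw [← DirectSum.sum_support_decompose 𝒞 x]
  rw [map_sum, comp_sum' 𝒞 _ σ hσ (fun j => f ((DirectSum.decompose 𝒞 x j : M)))
    (fun j _ => hf j ⟨_, (DirectSum.decompose 𝒞 x j).2, rfl⟩) i]
  split_ifs with h
  · rfl
  · rw [compLM_apply, DFinsupp.notMem_support_iff.mp h]
    simp

lemma sum_support_comp (x : M) [∀ (i : ℤ×ℤ) (y : 𝒞 i), Decidable (y ≠ 0)] :
    ∑ i ∈ DFinsupp.support (DirectSum.decompose 𝒞 x), compLM 𝒞 i x = x :=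
  DirectSum.sum_support_decompose 𝒞 x

lemma mem_bdeg_iff (k : ℤ) (x : M) :
    x ∈ bdeg 𝒞 k ↔ ∀ i : ℤ × ℤ, i.1 + i.2 ≠ k → compLM 𝒞 i x = 0 := by
  classical
  constructor
  · intro hx
    have : bdeg 𝒞 k ≤ ⨅ (i : ℤ × ℤ) (_ : i.1 + i.2 ≠ k), LinearMap.ker (compLM 𝒞 i) := by
      refine iSup_le fun p => le_iInf fun i => le_iInf fun hi => fun y hy => ?_
      have : (p, k - p) ≠ i := by rintro rfl; simp at hi
      simpa [LinearMap.mem_ker, compLM_apply] using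
        DirectSum.decompose_of_mem_ne 𝒞 hy this
    intro i hi
    simpa using (Submodule.mem_iInf _).mp ((Submodule.mem_iInf _).mp (this hx) i) hi
  · intro h
    rw [← sum_support_comp 𝒞 x]
    refine Submodule.sum_mem _ fun i hi => ?_
    have hik : i.1 + i.2 = k := by
      by_contra hc
      exact DFinsupp.mem_support_iff.mp hi (Subtype.ext (h i hc))
    have hi2 : (i.1, k - i.1) = i := by
      obtain ⟨a, b⟩ := i; simp only [Prod.mk.injEq]; simp only [Prod.fst, Prod.snd] at hik
      exact ⟨trivial, by omega⟩
    have hmem : compLM 𝒞 i x ∈ 𝒞 (i.1, k - i.1) := by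
      rw [hi2]; exact compLM_mem 𝒞 i x
    exact le_iSup (fun p : ℤ => 𝒞 (p, k - p)) i.1 hmem

lemma bproj_of_mem {i : ℤ × ℤ} {x : M} (hx : x ∈ 𝒞 i) (q : ℤ) :
    bproj 𝒞 q x = if q ≤ i.2 then x else 0 := by
  classical
  have : bproj 𝒞 q x = (DirectSum.coeLinearMap 𝒞)
      (DFinsupp.filter (fun pq => q ≤ pq.2) (DirectSum.decompose 𝒞 x)) := rfl
  rw [this, DirectSum.decompose_of_mem 𝒞 hx,
    show ((DirectSum.of (fun i => 𝒞 i) i) ⟨x, hx⟩) = DFinsupp.single i ⟨x, hx⟩ from rfl,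
    DFinsupp.filter_single]
  split_ifs with h
  · exact DirectSum.coeLinearMap_of 𝒞 i ⟨x, hx⟩
  · simp

lemma bproj_eq_sum (q : ℤ) (x : M) [∀ (i : ℤ×ℤ) (y : 𝒞 i), Decidable (y ≠ 0)] :
    bproj 𝒞 q x = ∑ i ∈ (DFinsupp.support (DirectSum.decompose 𝒞 x)).filter
      (fun i => q ≤ i.2), compLM 𝒞 i x := by
  classical
  conv_lhs => rw [← sum_support_comp 𝒞 x]
  rw [map_sum, Finset.sum_filter]
  exact Finset.sum_congr rfl fun i _ => bproj_of_mem 𝒞 (compLM_mem 𝒞 i x) q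

lemma comp_bproj (q : ℤ) (x : M) (i : ℤ × ℤ) :
    compLM 𝒞 i (bproj 𝒞 q x) = if q ≤ i.2 then compLM 𝒞 i x else 0 := by
  classical
  rw [bproj_eq_sum 𝒞 q x, comp_sum 𝒞 _ _ (fun j _ => compLM_mem 𝒞 j x) i]
  by_cases h : q ≤ i.2
  · rw [if_pos h]
    by_cases hs : (DirectSum.decompose 𝒞 x) i = 0
    · rw [if_neg (fun hm => DFinsupp.mem_support_iff.mp (Finset.mem_filter.mp hm).1 hs),
        compLM_apply, hs]
      simp
    · rw [if_pos (Finset.mem_filter.mpr ⟨DFinsupp.mem_support_iff.mpr hs, h⟩)]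
  · rw [if_neg h]
    split_ifs with hm
    · exact absurd (Finset.mem_filter.mp hm).2 h
    · rfl

lemma bproj_eq_zero_iff (q : ℤ) (x : M) :
    bproj 𝒞 q x = 0 ↔ ∀ i : ℤ × ℤ, q ≤ i.2 → compLM 𝒞 i x = 0 := by
  classical
  constructor
  · intro h i hi
    have := comp_bproj 𝒞 q x i
    rw [h, map_zero, if_pos hi] at this
    exact this.symm
  · intro h
    rw [bproj_eq_sum 𝒞 q x]
    exact Finset.sum_eq_zero fun i hi => h i (Finset.mem_filter.mp hi).2

theorem statement9
    (𝒞 : ℤ × ℤ → Submodule R M) [DirectSum.Decomposition 𝒞]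
    (hfq : ∀ p q : ℤ, p < 0 ∨ q < 0 → 𝒞 (p, q) = ⊥)
    (D21 D10 D01 : M →ₗ[R] M)
    (h21 : ∀ p q : ℤ, (𝒞 (p, q)).map D21 ≤ 𝒞 (p + 2, q - 1))
    (h10 : ∀ p q : ℤ, (𝒞 (p, q)).map D10 ≤ 𝒞 (p + 1, q))
    (h01 : ∀ p q : ℤ, (𝒞 (p, q)).map D01 ≤ 𝒞 (p, q + 1))
    (D : M →ₗ[R] M) (hDdef : D = D21 + D10 + D01) (hD : D ∘ₗ D = 0)
    (k q : ℤ)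
    -- `N` : the null subcomplex; its coboundaries `B(N, D̄)` are `D(N)`
    (N : Submodule R M) (hN : N = LinearMap.ker D01 ⊓ LinearMap.ker D21)
    -- `𝓜` : the elements of degree k whose coboundary is a coboundary of `N`
    (𝓜 : Submodule R M)
    (h𝓜 : 𝓜 = bdeg 𝒞 k ⊓ Submodule.comap D (Submodule.map D N)) :
    -- `π_q(Z^k(C,D)) = Z^k_q`
    (Submodule.map (bproj 𝒞 q) (bdeg 𝒞 k ⊓ LinearMap.ker D) : Set M) =
      {x : M | ∃ η, η ∈ 𝓜 ∧ bproj 𝒞 q η = x ∧ bproj 𝒞 q (D η) = 0} := by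
  classical
  ext x
  simp only [SetLike.mem_coe, Submodule.mem_map, Submodule.mem_inf, LinearMap.mem_ker,
    Set.mem_setOf_eq]
  constructor
  · rintro ⟨ζ, ⟨hdeg, hker⟩, rfl⟩
    refine ⟨ζ, ?_, rfl, by rw [hker, map_zero]⟩
    rw [h𝓜, Submodule.mem_inf]
    exact ⟨hdeg, Submodule.mem_comap.mpr ⟨0, N.zero_mem, by rw [map_zero, hker]⟩⟩
  · rintro ⟨η, hη, rfl, hπ⟩
    rw [h𝓜, Submodule.mem_inf] at hη
    obtain ⟨hηdeg, hηc⟩ := hη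
    obtain ⟨ν, hνN, hDν⟩ := Submodule.mem_comap.mp hηc
    rw [hN] at hνN
    simp only [SetLike.mem_coe, Submodule.mem_inf, LinearMap.mem_ker] at hνN
    obtain ⟨hν01, hν21⟩ := hνN
    -- σ maps and their injectivity
    have hσ21 : Function.Injective (fun j : ℤ × ℤ => (j.1 + 2, j.2 - 1)) := by
      intro a b h; simp only [Prod.ext_iff] at h ⊢; omega
    have hσ10 : Function.Injective (fun j : ℤ × ℤ => (j.1 + 1, j.2)) := by
      intro a b h; simp only [Prod.ext_iff] at h ⊢; omega
    have hσ01 : Function.Injective (fun j : ℤ × ℤ => (j.1, j.2 + 1)) := by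
      intro a b h; simp only [Prod.ext_iff] at h ⊢; omega
    have hf21 : ∀ i : ℤ × ℤ, (𝒞 i).map D21 ≤ 𝒞 (i.1 + 2, i.2 - 1) := fun i => h21 i.1 i.2
    have hf10 : ∀ i : ℤ × ℤ, (𝒞 i).map D10 ≤ 𝒞 (i.1 + 1, i.2) := fun i => h10 i.1 i.2
    have hf01 : ∀ i : ℤ × ℤ, (𝒞 i).map D01 ≤ 𝒞 (i.1, i.2 + 1) := fun i => h01 i.1 i.2
    -- components of ν lie in the two kernels
    have hc01 : ∀ i : ℤ × ℤ, D01 (compLM 𝒞 i ν) = 0 := by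
      intro i
      have := map_comp 𝒞 D01 _ hσ01 hf01 ν i
      rw [hν01, map_zero] at this
      exact this.symm
    have hc21 : ∀ i : ℤ × ℤ, D21 (compLM 𝒞 i ν) = 0 := by
      intro i
      have := map_comp 𝒞 D21 _ hσ21 hf21 ν i
      rw [hν21, map_zero] at this
      exact this.symm
    have hDνeq : D ν = D10 ν := by
      rw [hDdef]
      simp only [LinearMap.add_apply, hν21, hν01, zero_add, add_zero]
    -- D η lies in total degree k + 1
    have hDη : D η ∈ bdeg 𝒞 (k + 1) := by
      have key : ∀ (f : M →ₗ[R] M) (a b : ℤ), (∀ p j : ℤ, (𝒞 (p, j)).map f ≤ 𝒞 (p + a, j + b))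
          → a + b = 1 → f η ∈ bdeg 𝒞 (k + 1) := by
        intro f a b hf hab
        have : (bdeg 𝒞 k).map f ≤ bdeg 𝒞 (k + 1) := by
          rw [bdeg, Submodule.map_iSup]
          refine iSup_le fun p => le_trans (hf p (k - p)) ?_
          have he : (p + a, k - p + b) = (p + a, (k + 1) - (p + a)) := by
            have h2 : k - p + b = (k + 1) - (p + a) := by omega
            rw [h2]
          rw [he]
          exact le_iSup (fun p : ℤ => 𝒞 (p, (k + 1) - p)) (p + a)
        exact this ⟨η, hηdeg, rfl⟩
      have e21 : D21 η ∈ bdeg 𝒞 (k + 1) := key D21 2 (-1)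
        (fun p j => by have := h21 p j; rwa [show j - 1 = j + (-1) by omega] at this) (by omega)
      have e10 : D10 η ∈ bdeg 𝒞 (k + 1) := key D10 1 0
        (fun p j => by simpa using h10 p j) (by omega)
      have e01 : D01 η ∈ bdeg 𝒞 (k + 1) := key D01 0 1
        (fun p j => by simpa using h01 p j) (by omega)
      rw [hDdef]
      exact Submodule.add_mem _ (Submodule.add_mem _ e21 e10) e01
    have hDηcomp : ∀ i : ℤ × ℤ, (i.1 + i.2 ≠ k + 1 ∨ q ≤ i.2) → compLM 𝒞 i (D η) = 0 := by
      rintro i (h | h)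
      · exact (mem_bdeg_iff 𝒞 (k + 1) (D η)).mp hDη i h
      · exact (bproj_eq_zero_iff 𝒞 q (D η)).mp hπ i h
    have hD10comp : ∀ i : ℤ × ℤ, (i.1 + i.2 ≠ k ∨ q ≤ i.2) → D10 (compLM 𝒞 i ν) = 0 := by
      intro i hi
      have hm := map_comp 𝒞 D10 _ hσ10 hf10 ν i
      rw [← hDνeq, hDν] at hm
      rw [← hm]
      refine hDηcomp (i.1 + 1, i.2) ?_
      rcases hi with h | h
      · left; show i.1 + 1 + i.2 ≠ k + 1; omega
      · right; exact h
    -- the correction term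
    set s := DFinsupp.support (DirectSum.decompose 𝒞 ν) with hs
    set t := s.filter (fun i : ℤ × ℤ => i.1 + i.2 = k ∧ i.2 < q) with ht
    set ν' := ∑ i ∈ t, compLM 𝒞 i ν with hν'
    have hcompν' : ∀ j : ℤ × ℤ, compLM 𝒞 j ν' = if j ∈ t then compLM 𝒞 j ν else 0 :=
      fun j => comp_sum 𝒞 t _ (fun i _ => compLM_mem 𝒞 i ν) j
    have hν'deg : ν' ∈ bdeg 𝒞 k := by
      rw [mem_bdeg_iff]
      intro i hi
      rw [hcompν', if_neg (fun hm => hi (Finset.mem_filter.mp hm).2.1)]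
    have hν'proj : bproj 𝒞 q ν' = 0 := by
      rw [bproj_eq_zero_iff]
      intro i hi
      rw [hcompν', if_neg (fun hm => absurd (Finset.mem_filter.mp hm).2.2 (not_lt.mpr hi))]
    have hDν' : D ν' = D η := by
      have h1 : D ν' = D10 ν' := by
        rw [hDdef]
        simp only [LinearMap.add_apply, hν', map_sum]
        exact Finset.sum_congr rfl fun i _ => by rw [hc21 i, hc01 i, zero_add, add_zero]
      rw [h1, hν', map_sum]
      rw [Finset.sum_subset (Finset.filter_subset _ s) ?_]
      · rw [← map_sum, sum_support_comp 𝒞 ν, ← hDνeq, hDν]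
      · intro i his hit
        rw [Finset.mem_filter] at hit
        push_neg at hit
        refine hD10comp i ?_
        by_cases hk : i.1 + i.2 = k
        · exact Or.inr (hit his hk)
        · exact Or.inl hk
    refine ⟨η - ν', ⟨Submodule.sub_mem _ hηdeg hν'deg, ?_⟩, ?_⟩
    · rw [map_sub, hDν', sub_self]
    · rw [map_sub, hν'proj, sub_zero]
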